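/- arXiv:1506.04208 — 3 statements merged into one kernel-verified Lean document; each statement's English description precedes it below -/
import Mathlib

section
/- Let A be a bounded positive operator on a separable real Hilbert space H = H1 ⊕ H2, fix an ordered orthonormal basis of H2, and set Aⁿ := Pⁿ A Pⁿ. Then for every n the pair (Aⁿ, H2) is compatible: there exists a bounded operator Q on H with Q² = Q, range Q = H2, and Aⁿ Q = Q* Aⁿ. -/
open MeasureTheory ProbabilityTheory Filter Topology
open scoped RealInnerProductSpace

noncomputable section

variable {H : Type*} [NormedAddCommGroup H] [InnerProductSpace ℝ H] [CompleteSpace H]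

/-- The orthogonal projection onto a closed subspace, viewed as a map `H → H`. -/
def projL (S : Submodule ℝ H) [CompleteSpace S] : H →L[ℝ] H :=
  S.subtypeL.comp (S.orthogonalProjectionOnto)

/-- For an orthonormal family `e`, the orthogonal projection onto the span of
`e 0, …, e (n-1)`, viewed as a map `H → H`. -/
def projFin (e : ℕ → H) (n : ℕ) : H →L[ℝ] H :=
  ∑ i ∈ Finset.range n, (innerSL ℝ (e i)).smulRight (e i)

/-- For a positive operator, `⟪A u, u⟫ = 0` implies `A u = 0`. -/
lemma pos_apply_eq_zero (A : H →L[ℝ] H) (hA : A.IsPositive) (u : H)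
    (h : ⟪A u, u⟫ = 0) : A u = 0 := by
  have hsym : ∀ x y : H, ⟪A x, y⟫ = ⟪x, A y⟫ := fun x y => hA.1 x y
  have hpos : ∀ x : H, 0 ≤ ⟪A x, x⟫ := fun x => by
    have := hA.2 x
    simpa [ContinuousLinearMap.reApplyInnerSelf] using this
  by_contra hne
  set w := A u with hw
  have ha : (0:ℝ) < ⟪w, w⟫ := by
    rcases lt_or_eq_of_le (real_inner_self_nonneg (x := w)) with h' | h'
    · exact h'
    · exact absurd (inner_self_eq_zero.mp h'.symm) hne
  set a : ℝ := ⟪w, w⟫ with hadef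
  set b : ℝ := ⟪A w, w⟫ with hbdef
  have hb : 0 ≤ b := hpos w
  set t : ℝ := -(a/(b+1)) with htdef
  have key : 0 ≤ ⟪A (u + t • w), u + t • w⟫ := hpos _
  have hAuw : ⟪A u, w⟫ = a := by rw [hadef, hw]
  have hAwu : ⟪A w, u⟫ = a := by
    rw [hsym w u, real_inner_comm, hw, ← hadef]
  have hexp : ⟪A (u + t • w), u + t • w⟫ = 2*t*a + t*t*b := by
    rw [A.map_add, A.map_smul, inner_add_left, inner_add_right, inner_add_right,
      real_inner_smul_right, real_inner_smul_left, real_inner_smul_left,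
      real_inner_smul_right, h, hAuw, hAwu, ← hbdef]
    ring
  rw [hexp] at key
  have hb1 : (0:ℝ) < b + 1 := by linarith
  have ht : t * (b+1) = -a := by
    rw [htdef]
    field_simp
  nlinarith [mul_nonneg key (sq_nonneg (b+1)), mul_pos ha ha]

/-- The orthogonal projection `Pⁿ = P_{H1} + P_{H2ⁿ}` onto `H1 ⊕ H2ⁿ`. -/
def Pn (H1 : Submodule ℝ H) [CompleteSpace H1] (e : ℕ → H) (n : ℕ) : H →L[ℝ] H :=
  projL H1 + projFin e n

/-- For a bounded positive operator `A` on `H = H1 ⊕ H2` (with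
`H2 = H1ᗮ` spanned by the ordered orthonormal basis `e`), each truncation
`Aⁿ = Pⁿ A Pⁿ` is compatible with `H2`: there is an `Aⁿ`-symmetric oblique
projection onto `H2`. -/
theorem truncation_compatible
    (H1 : Submodule ℝ H) [CompleteSpace H1]
    (A : H →L[ℝ] H) (hA : A.IsPositive)
    (e : ℕ → H) (he : Orthonormal ℝ e) (hemem : ∀ k, e k ∈ H1ᗮ)
    (hspan : (Submodule.span ℝ (Set.range e)).topologicalClosure = H1ᗮ) :
    ∀ n : ℕ, ∃ Q : H →L[ℝ] H,
      Q * Q = Q ∧ Set.range Q = (H1ᗮ : Set H) ∧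
      (Pn H1 e n * A * Pn H1 e n) * Q
        = ContinuousLinearMap.adjoint Q * (Pn H1 e n * A * Pn H1 e n) := by
  intro n
  classical
  have hA_sym : ∀ x y : H, ⟪A x, y⟫ = ⟪x, A y⟫ := fun x y => hA.1 x y
  set P1 : H →L[ℝ] H := projL H1 with hP1def
  set P2 : H →L[ℝ] H := projL H1ᗮ with hP2def
  set F : H →L[ℝ] H := projFin e n with hFdef
  -- basic formulas for the projections
  have hP1sym : ∀ z w : H, ⟪P1 z, w⟫ = ⟪z, P1 w⟫ := fun z w =>
    Submodule.inner_starProjection_left_eq_right H1 z w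
  have hP2sym : ∀ z w : H, ⟪P2 z, w⟫ = ⟪z, P2 w⟫ := fun z w =>
    Submodule.inner_starProjection_left_eq_right H1ᗮ z w
  have hP1_orth : ∀ z ∈ H1ᗮ, P1 z = 0 := by
    intro z hz
    show (H1.subtypeL.comp (H1.orthogonalProjectionOnto)) z = 0
    simp [Submodule.orthogonalProjectionOnto_apply_of_mem_orthogonal hz]
  have hP2_id : ∀ z ∈ H1ᗮ, P2 z = z := by
    intro z hz
    exact Submodule.starProjection_eq_self_iff.mpr hz
  have hP2_mem : ∀ z : H, P2 z ∈ H1ᗮ := fun z => (H1ᗮ.orthogonalProjectionOnto z).2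
  have hFapply : ∀ x, F x = ∑ i ∈ Finset.range n, ⟪e i, x⟫ • e i := by
    intro x
    simp [hFdef, projFin, ContinuousLinearMap.sum_apply]
  have hF_mem : ∀ x, F x ∈ H1ᗮ := fun x => by
    rw [hFapply]
    exact Submodule.sum_mem _ fun i _ => Submodule.smul_mem _ _ (hemem i)
  have hF_inner : ∀ x z : H, ⟪F x, z⟫ = ∑ i ∈ Finset.range n, ⟪e i, x⟫ * ⟪e i, z⟫ := by
    intro x z
    rw [hFapply, sum_inner]
    simp [real_inner_smul_left]
  have hFsym : ∀ x z : H, ⟪F x, z⟫ = ⟪x, F z⟫ := by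
    intro x z
    rw [hF_inner, ← real_inner_comm x (F z), hF_inner]
    exact Finset.sum_congr rfl fun i _ => by ring
  have hite := orthonormal_iff_ite.mp he
  have hFe : ∀ i, i < n → F (e i) = e i := by
    intro i hi
    rw [hFapply]
    have : ∀ j ∈ Finset.range n, ⟪e j, e i⟫ • e j = if j = i then e j else 0 := by
      intro j _
      rw [hite j i]
      split <;> simp
    rw [Finset.sum_congr rfl this, Finset.sum_ite_eq' (Finset.range n) i]
    simp [Finset.mem_range.mpr hi]
  -- the finite-dimensional machinery
  let d : H →L[ℝ] EuclideanSpace ℝ (Fin n) :=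
    (PiLp.continuousLinearEquiv 2 ℝ (fun _ : Fin n => ℝ)).symm.toContinuousLinearMap.comp
      (ContinuousLinearMap.pi fun i : Fin n => (innerSL ℝ (e i)).comp A)
  have hd : ∀ (x : H) (i : Fin n), d x i = ⟪e i, A x⟫ := fun x i => rfl
  let emb' : EuclideanSpace ℝ (Fin n) →ₗ[ℝ] H :=
    { toFun := fun v => ∑ i, v i • e i
      map_add' := by
        intro v w
        simp [PiLp.add_apply, add_smul, Finset.sum_add_distrib]
      map_smul' := by
        intro c v
        simp [PiLp.smul_apply, Finset.smul_sum, smul_smul] }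
  let emb : EuclideanSpace ℝ (Fin n) →L[ℝ] H := LinearMap.toContinuousLinearMap emb'
  have hemb : ∀ v : EuclideanSpace ℝ (Fin n), emb v = ∑ i, v i • e i := fun v => rfl
  have hembmem : ∀ v : EuclideanSpace ℝ (Fin n), emb v ∈ H1ᗮ := fun v => by
    rw [hemb]
    exact Submodule.sum_mem _ fun i _ => Submodule.smul_mem _ _ (hemem i)
  have hVinner : ∀ v w : EuclideanSpace ℝ (Fin n), ⟪v, w⟫ = ∑ i, v i * w i := by
    intro v w
    simp [PiLp.inner_apply, RCLike.inner_apply, conj_trivial]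
    exact Finset.sum_congr rfl fun i _ => mul_comm _ _
  have hbridge : ∀ (v : EuclideanSpace ℝ (Fin n)) (z : H), ⟪emb v, z⟫ = ∑ i, v i * ⟪e i, z⟫ := by
    intro v z
    rw [hemb, sum_inner]
    simp [real_inner_smul_left]
  have hbridge' : ∀ (v : EuclideanSpace ℝ (Fin n)) (z : H), ⟪emb v, A z⟫ = ⟪v, d z⟫ := by
    intro v z
    rw [hbridge, hVinner]
    exact Finset.sum_congr rfl fun i _ => by rw [hd]
  let L : EuclideanSpace ℝ (Fin n) →ₗ[ℝ] EuclideanSpace ℝ (Fin n) := (d : H →ₗ[ℝ] EuclideanSpace ℝ (Fin n)).comp (emb' : EuclideanSpace ℝ (Fin n) →ₗ[ℝ] H)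
  have hL : ∀ v : EuclideanSpace ℝ (Fin n), L v = d (emb v) := fun v => rfl
  have hLsym : ∀ v w : EuclideanSpace ℝ (Fin n), ⟪L v, w⟫ = ⟪v, L w⟫ := by
    intro v w
    calc ⟪L v, w⟫ = ⟪w, L v⟫ := real_inner_comm _ _
      _ = ⟪emb w, A (emb v)⟫ := by rw [hL]; exact (hbridge' w (emb v)).symm
      _ = ⟪A (emb w), emb v⟫ := (hA_sym (emb w) (emb v)).symm
      _ = ⟪emb v, A (emb w)⟫ := real_inner_comm _ _
      _ = ⟪v, L w⟫ := by rw [hL]; exact hbridge' v (emb w)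
  have hker : ∀ v : EuclideanSpace ℝ (Fin n), L v = 0 → A (emb v) = 0 := by
    intro v hv
    apply pos_apply_eq_zero A hA
    have h1 : ⟪emb v, A (emb v)⟫ = ⟪v, d (emb v)⟫ := hbridge' v (emb v)
    rw [← hL, hv, inner_zero_right] at h1
    rw [real_inner_comm]
    exact h1
  have hborth : ∀ (z : H) (w : EuclideanSpace ℝ (Fin n)), L w = 0 → ⟪d z, w⟫ = 0 := by
    intro z w hw
    have h2 : A (emb w) = 0 := hker w hw
    have h3 : ⟪emb w, A z⟫ = 0 := by
      rw [← hA_sym (emb w) z, h2, inner_zero_left]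
    rw [real_inner_comm, ← hbridge' w z]
    exact h3
  -- inverse of the regularized Gram operator
  let K : Submodule ℝ (EuclideanSpace ℝ (Fin n)) := LinearMap.ker L
  haveI : CompleteSpace K := FiniteDimensional.complete ℝ K
  let Pk : EuclideanSpace ℝ (Fin n) →ₗ[ℝ] EuclideanSpace ℝ (Fin n) := ((projL K : EuclideanSpace ℝ (Fin n) →L[ℝ] EuclideanSpace ℝ (Fin n)) : EuclideanSpace ℝ (Fin n) →ₗ[ℝ] EuclideanSpace ℝ (Fin n))
  have hPk_mem : ∀ v : EuclideanSpace ℝ (Fin n), Pk v ∈ K := fun v => (K.orthogonalProjectionOnto v).2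
  have hPk_id : ∀ v ∈ K, Pk v = v := by
    intro v hv
    exact Submodule.starProjection_eq_self_iff.mpr hv
  have hPk_sym : ∀ v w : EuclideanSpace ℝ (Fin n), ⟪Pk v, w⟫ = ⟪v, Pk w⟫ := fun v w =>
    Submodule.inner_starProjection_left_eq_right K v w
  let N : EuclideanSpace ℝ (Fin n) →ₗ[ℝ] EuclideanSpace ℝ (Fin n) := L + Pk
  have hNapp : ∀ v : EuclideanSpace ℝ (Fin n), N v = L v + Pk v := fun v => rfl
  have hNsym : ∀ v w : EuclideanSpace ℝ (Fin n), ⟪N v, w⟫ = ⟪v, N w⟫ := by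
    intro v w
    rw [hNapp, hNapp, inner_add_left, inner_add_right, hLsym, hPk_sym]
  have hNker : ∀ v : EuclideanSpace ℝ (Fin n), N v = 0 → v = 0 := by
    intro v hv
    have h1 : ⟪N v, Pk v⟫ = 0 := by rw [hv, inner_zero_left]
    have h2 : ⟪L v, Pk v⟫ = 0 := by
      rw [hLsym]
      have hk : L (Pk v) = 0 := hPk_mem v
      rw [hk, inner_zero_right]
    have h3 : ⟪Pk v, Pk v⟫ = 0 := by
      rw [hNapp, inner_add_left, h2, zero_add] at h1
      exact h1
    have h4 : Pk v = 0 := inner_self_eq_zero.mp h3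
    have h5 : L v = 0 := by
      have := hv
      rw [hNapp, h4, add_zero] at this
      exact this
    have h6 : v ∈ K := h5
    rw [← hPk_id v h6, h4]
  have hNinj : Function.Injective N := by
    intro v w hvw
    have : N (v - w) = 0 := by rw [map_sub, hvw, sub_self]
    have := hNker _ this
    exact sub_eq_zero.mp this
  have hNbij : Function.Bijective N := ⟨hNinj, LinearMap.injective_iff_surjective.mp hNinj⟩
  let Geq := LinearEquiv.ofBijective N hNbij
  let Ginv : EuclideanSpace ℝ (Fin n) →ₗ[ℝ] EuclideanSpace ℝ (Fin n) := (Geq.symm : EuclideanSpace ℝ (Fin n) ≃ₗ[ℝ] EuclideanSpace ℝ (Fin n))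
  have hNG : ∀ v : EuclideanSpace ℝ (Fin n), N (Ginv v) = v := fun v => Geq.apply_symm_apply v
  have hGsym : ∀ v w : EuclideanSpace ℝ (Fin n), ⟪Ginv v, w⟫ = ⟪v, Ginv w⟫ := by
    intro v w
    calc ⟪Ginv v, w⟫ = ⟪Ginv v, N (Ginv w)⟫ := by rw [hNG]
      _ = ⟪N (Ginv v), Ginv w⟫ := (hNsym _ _).symm
      _ = ⟪v, Ginv w⟫ := by rw [hNG]
  have hsolve : ∀ z : H, L (Ginv (d z)) = d z := by
    intro z
    set t : EuclideanSpace ℝ (Fin n) := Ginv (d z) with htdef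
    have hNt : L t + Pk t = d z := hNG (d z)
    have h1 : ⟪d z, Pk t⟫ = 0 := hborth z (Pk t) (hPk_mem t)
    have h2 : ⟪L t, Pk t⟫ = 0 := by
      rw [hLsym]
      have hk : L (Pk t) = 0 := hPk_mem t
      rw [hk, inner_zero_right]
    have h3 : ⟪Pk t, Pk t⟫ = 0 := by
      have := congrArg (fun u : EuclideanSpace ℝ (Fin n) => ⟪u, Pk t⟫) hNt
      simp only [inner_add_left, h2, zero_add] at this
      rw [this, h1]
    have h4 : Pk t = 0 := inner_self_eq_zero.mp h3
    rw [h4, add_zero] at hNt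
    exact hNt
  -- the correcting operator T and the oblique projection Q
  let Gc : EuclideanSpace ℝ (Fin n) →L[ℝ] EuclideanSpace ℝ (Fin n) := LinearMap.toContinuousLinearMap Ginv
  let T : H →L[ℝ] H := emb.comp (Gc.comp (d.comp P1))
  have hT : ∀ x : H, T x = emb (Ginv (d (P1 x))) := fun x => rfl
  have hTmem : ∀ x : H, T x ∈ H1ᗮ := fun x => by rw [hT]; exact hembmem _
  let Q : H →L[ℝ] H := P2 + T
  have hQapp : ∀ x : H, Q x = P2 x + T x := fun x => rfl
  have hQmem : ∀ x : H, Q x ∈ H1ᗮ := fun x =>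
    Submodule.add_mem _ (hP2_mem x) (hTmem x)
  have hQid : ∀ z ∈ H1ᗮ, Q z = z := by
    intro z hz
    rw [hQapp, hP2_id z hz, hT, hP1_orth z hz]
    simp
  -- key identities
  have hdT : ∀ x : H, d (T x) = d (P1 x) := by
    intro x
    rw [hT]
    have : d (emb (Ginv (d (P1 x)))) = L (Ginv (d (P1 x))) := (hL _).symm
    rw [this, hsolve]
  have hAinner_F : ∀ (w : H) (y : H),
      ⟪A w, F y⟫ = ∑ i ∈ Finset.range n, ⟪e i, y⟫ * ⟪e i, A w⟫ := by
    intro w y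
    rw [real_inner_comm, hF_inner]
  have hK1 : ∀ x y : H, ⟪A (T x), F y⟫ = ⟪A (P1 x), F y⟫ := by
    intro x y
    rw [hAinner_F, hAinner_F]
    refine Finset.sum_congr rfl fun i hi => ?_
    have hi' : i < n := Finset.mem_range.mp hi
    have h := congrFun (congrArg (fun v : EuclideanSpace ℝ (Fin n) => (v : Fin n → ℝ)) (hdT x)) ⟨i, hi'⟩
    have h1 : d (T x) ⟨i, hi'⟩ = d (P1 x) ⟨i, hi'⟩ := h
    rw [hd, hd] at h1
    simpa using congrArg (fun r => ⟪e i, y⟫ * r) h1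
  have hK2 : ∀ x y : H, ⟪A (T x), P1 y⟫ = ⟪A (P1 x), T y⟫ := by
    intro x y
    calc ⟪A (T x), P1 y⟫ = ⟪T x, A (P1 y)⟫ := hA_sym _ _
      _ = ⟪emb (Ginv (d (P1 x))), A (P1 y)⟫ := by rw [hT]
      _ = ⟪Ginv (d (P1 x)), d (P1 y)⟫ := hbridge' _ _
      _ = ⟪d (P1 x), Ginv (d (P1 y))⟫ := hGsym _ _
      _ = ⟪Ginv (d (P1 y)), d (P1 x)⟫ := real_inner_comm _ _
      _ = ⟪emb (Ginv (d (P1 y))), A (P1 x)⟫ := (hbridge' _ _).symm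
      _ = ⟪T y, A (P1 x)⟫ := by rw [hT]
      _ = ⟪A (P1 x), T y⟫ := real_inner_comm _ _
  -- computing Pn ∘ Q
  have hFemb : ∀ v : EuclideanSpace ℝ (Fin n), F (emb v) = emb v := by
    intro v
    rw [hemb, _root_.map_sum]
    refine Finset.sum_congr rfl fun i _ => ?_
    rw [F.map_smul, hFe i i.2]
  have hFP2 : ∀ x : H, F (P2 x) = F x := by
    intro x
    rw [hFapply, hFapply]
    refine Finset.sum_congr rfl fun i _ => ?_
    congr 1
    have h1 : ⟪P2 (e i), x⟫ = ⟪e i, P2 x⟫ := hP2sym (e i) x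
    rw [hP2_id (e i) (hemem i)] at h1
    exact h1.symm
  have hPnapp : ∀ x : H, (Pn H1 e n) x = P1 x + F x := fun x => rfl
  have hPnsym : ∀ z w : H, ⟪(Pn H1 e n) z, w⟫ = ⟪z, (Pn H1 e n) w⟫ := by
    intro z w
    rw [hPnapp, hPnapp, inner_add_left, inner_add_right, hP1sym, hFsym]
  have hPnQ : ∀ x : H, (Pn H1 e n) (Q x) = F x + T x := by
    intro x
    rw [hPnapp, hQapp, P1.map_add, F.map_add, hP1_orth _ (hP2_mem x), hP1_orth _ (hTmem x),
      hFP2, hT, hFemb, ← hT]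
    abel
  -- the main symmetry computation
  have expand : ∀ u w : H, ⟪A (F u + T u), P1 w + F w⟫ =
      ⟪A (F u), P1 w⟫ + ⟪A (T u), P1 w⟫ + (⟪A (F u), F w⟫ + ⟪A (T u), F w⟫) := by
    intro u w
    rw [A.map_add, inner_add_left, inner_add_right, inner_add_right]
    ring
  have main' : ∀ x y : H, ⟪A (F x + T x), P1 y + F y⟫ = ⟪A (F y + T y), P1 x + F x⟫ := by
    intro x y
    rw [expand, expand]
    have e2 : ⟪A (T x), P1 y⟫ = ⟪A (T y), P1 x⟫ := by
      rw [hK2, hA_sym]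
      exact (real_inner_comm _ _).symm
    have e4 : ⟪A (T x), F y⟫ = ⟪A (F y), P1 x⟫ := by
      rw [hK1, hA_sym]
      exact (real_inner_comm _ _).symm
    have e4' : ⟪A (T y), F x⟫ = ⟪A (F x), P1 y⟫ := by
      rw [hK1, hA_sym]
      exact (real_inner_comm _ _).symm
    have e1 : ⟪A (F x), F y⟫ = ⟪A (F y), F x⟫ := by
      rw [hA_sym]
      exact (real_inner_comm _ _).symm
    linarith [e2, e4, e4', e1]
  have main : ∀ x y : H,
      ⟪((Pn H1 e n * A * Pn H1 e n) * Q) x, y⟫ = ⟪x, ((Pn H1 e n * A * Pn H1 e n) * Q) y⟫ := by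
    intro x y
    have happ : ∀ z : H, ((Pn H1 e n * A * Pn H1 e n) * Q) z
        = (Pn H1 e n) (A ((Pn H1 e n) (Q z))) := fun z => rfl
    rw [happ, happ, hPnQ, hPnQ, hPnsym, ← hPnsym x (A (F y + T y))]
    rw [hPnapp y, hPnapp x]
    rw [show (⟪P1 x + F x, A (F y + T y)⟫ : ℝ) = ⟪A (F y + T y), P1 x + F x⟫ from
      (real_inner_comm _ _).symm]
    exact main' x y
  -- assembling the three conclusions
  refine ⟨Q, ?_, ?_, ?_⟩
  · ext x
    show Q (Q x) = Q x
    exact hQid _ (hQmem x)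
  · ext z
    constructor
    · rintro ⟨x, rfl⟩
      exact hQmem x
    · intro hz
      exact ⟨z, hQid z hz⟩
  · have hQsa : (Pn H1 e n * A * Pn H1 e n) * Q
        = ContinuousLinearMap.adjoint ((Pn H1 e n * A * Pn H1 e n) * Q) :=
      (ContinuousLinearMap.eq_adjoint_iff _ _).mpr main
    have hPn_sa : ContinuousLinearMap.adjoint (Pn H1 e n) = Pn H1 e n :=
      (ContinuousLinearMap.eq_adjoint_iff (Pn H1 e n) (Pn H1 e n)).mpr
        (fun x y => hPnsym x y) |>.symm
    have hA_adj : ContinuousLinearMap.adjoint A = A := hA.isSelfAdjoint.adjoint_eq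
    have hAn_sa : ContinuousLinearMap.adjoint (Pn H1 e n * A * Pn H1 e n)
        = Pn H1 e n * A * Pn H1 e n := by
      rw [ContinuousLinearMap.mul_def, ContinuousLinearMap.mul_def,
        ContinuousLinearMap.adjoint_comp, ContinuousLinearMap.adjoint_comp,
        hPn_sa, hA_adj]
      rfl
    calc (Pn H1 e n * A * Pn H1 e n) * Q
        = ContinuousLinearMap.adjoint ((Pn H1 e n * A * Pn H1 e n) * Q) := hQsa
      _ = ContinuousLinearMap.adjoint Q * ContinuousLinearMap.adjoint (Pn H1 e n * A * Pn H1 e n) := by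
          rw [ContinuousLinearMap.mul_def, ContinuousLinearMap.adjoint_comp]
          rfl
      _ = ContinuousLinearMap.adjoint Q * (Pn H1 e n * A * Pn H1 e n) := by rw [hAn_sa]

end
end

section
/- Let A be a bounded positive trace-class operator on a separable real Hilbert space H = H1 ⊕ H2, fix an ordered orthonormal basis of H2, and set Aⁿ := Pⁿ A Pⁿ. Let Tⁿ be a short of Aⁿ to H1 for each n and let T be a short of A to H1. Then Tⁿ and T are trace class and ‖Tⁿ − T‖₁ → 0 as n → ∞, where ‖·‖₁ denotes the trace norm. -/
set_option maxHeartbeats 800000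
set_option synthInstance.maxHeartbeats 200000


open MeasureTheory ProbabilityTheory Filter Topology
open scoped RealInnerProductSpace

noncomputable section

variable {H : Type*} [NormedAddCommGroup H] [InnerProductSpace ℝ H] [CompleteSpace H]

/-- `T` is a short of the bounded positive operator `A` to the closed subspace `S`. -/
def IsShort (A T : H →L[ℝ] H) (S : Submodule ℝ H) : Prop :=
  T.IsPositive ∧ (A - T).IsPositive ∧ (∀ x, T x ∈ S) ∧
    ∀ X : H →L[ℝ] H, X.IsPositive → (A - X).IsPositive → (∀ x, X x ∈ S) →
      (T - X).IsPositive

namespace ShortAux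

open ContinuousLinearMap

lemma pos_inner {T : H →L[ℝ] H} (hT : T.IsPositive) (x : H) : 0 ≤ ⟪T x, x⟫ := by
  simpa [ContinuousLinearMap.reApplyInnerSelf] using hT.2 x

lemma pos_def {T : H →L[ℝ] H} (h1 : IsSelfAdjoint T) (h2 : ∀ x, 0 ≤ ⟪T x, x⟫) :
    T.IsPositive := by
  exact ⟨isSelfAdjoint_iff_isSymmetric.mp h1, fun x => by simpa [ContinuousLinearMap.reApplyInnerSelf] using h2 x⟩

lemma symm_inner {T : H →L[ℝ] H} (hT : IsSelfAdjoint T) (x y : H) :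
    ⟪T x, y⟫ = ⟪x, T y⟫ :=
  ((isSelfAdjoint_iff_isSymmetric).mp hT) x y

/-- Cauchy-Schwarz for positive operators. -/
lemma cs {T : H →L[ℝ] H} (hT : T.IsPositive) (x y : H) :
    ⟪T x, y⟫ ^ 2 ≤ ⟪T x, x⟫ * ⟪T y, y⟫ := by
  have key : ∀ t : ℝ, 0 ≤ ⟪T y, y⟫ * t * t + (2 * ⟪T x, y⟫) * t + ⟪T x, x⟫ := by
    intro t
    have h0 := pos_inner hT (x + t • y)
    have hsym : ⟪T y, x⟫ = ⟪T x, y⟫ := by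
      rw [symm_inner hT.isSelfAdjoint, real_inner_comm]
    simp only [map_add, T.map_smul, inner_add_left, inner_add_right, inner_smul_left,
      inner_smul_right, smul_apply, RCLike.star_def, starRingEnd_apply, star_trivial] at h0
    rw [hsym] at h0
    nlinarith [h0]
  have key' : ∀ t : ℝ, 0 ≤ ⟪T y, y⟫ * (t * t) + (2 * ⟪T x, y⟫) * t + ⟪T x, x⟫ := by
    intro t; have := key t; nlinarith [this]
  have := discrim_le_zero key'
  rw [discrim] at this
  nlinarith [this]

lemma norm_sq_le {T : H →L[ℝ] H} (hT : T.IsPositive) (x : H) :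
    ‖T x‖ ^ 2 ≤ ‖T‖ * ⟪T x, x⟫ := by
  have h := cs hT x (T x)
  have h1 : ⟪T x, T x⟫ = ‖T x‖ ^ 2 := real_inner_self_eq_norm_sq _
  have h2 : ⟪T (T x), T x⟫ ≤ ‖T‖ * ‖T x‖ ^ 2 := by
    calc ⟪T (T x), T x⟫ ≤ ‖T (T x)‖ * ‖T x‖ := real_inner_le_norm _ _
    _ ≤ (‖T‖ * ‖T x‖) * ‖T x‖ := by
        gcongr
        exact T.le_opNorm _
    _ = ‖T‖ * ‖T x‖ ^ 2 := by ring
  rcases eq_or_lt_of_le (norm_nonneg (T x)) with hz | hz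
  · rw [← hz]
    simpa using mul_nonneg (norm_nonneg T) (pos_inner hT x)
  · have h3 : (‖T x‖ ^ 2) ^ 2 ≤ ⟪T x, x⟫ * (‖T‖ * ‖T x‖ ^ 2) := by
      nlinarith [pos_inner hT x, pos_inner hT (T x)]
    nlinarith [h3, mul_pos hz hz, pos_inner hT x, norm_nonneg T]

lemma opNorm_le_of_forms {T : H →L[ℝ] H} (hT : T.IsPositive) {M : ℝ} (hM : 0 ≤ M)
    (h : ∀ x, ⟪T x, x⟫ ≤ M * ‖x‖ ^ 2) : ‖T‖ ≤ M := by
  have key : ‖T‖ ≤ Real.sqrt (‖T‖ * M) := by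
    refine T.opNorm_le_bound (Real.sqrt_nonneg _) fun x => ?_
    have h1 : ‖T x‖ ^ 2 ≤ (‖T‖ * M) * ‖x‖ ^ 2 := by
      calc ‖T x‖ ^ 2 ≤ ‖T‖ * ⟪T x, x⟫ := norm_sq_le hT x
      _ ≤ ‖T‖ * (M * ‖x‖ ^ 2) := by
          exact mul_le_mul_of_nonneg_left (h x) (norm_nonneg _)
      _ = (‖T‖ * M) * ‖x‖ ^ 2 := by ring
    calc ‖T x‖ = Real.sqrt (‖T x‖ ^ 2) := by rw [Real.sqrt_sq (norm_nonneg _)]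
    _ ≤ Real.sqrt ((‖T‖ * M) * ‖x‖ ^ 2) := Real.sqrt_le_sqrt h1
    _ = Real.sqrt (‖T‖ * M) * ‖x‖ := by
        rw [Real.sqrt_mul (by positivity), Real.sqrt_sq (norm_nonneg _)]
  have h2 : ‖T‖ ^ 2 ≤ ‖T‖ * M := by
    have := Real.sq_sqrt (mul_nonneg (norm_nonneg T) hM)
    nlinarith [norm_nonneg T, Real.sqrt_nonneg (‖T‖ * M)]
  rcases eq_or_lt_of_le (norm_nonneg T) with hz | hz
  · rw [← hz]; exact hM
  · nlinarith

lemma norm_le_norm_of_le {S T : H →L[ℝ] H} (hS : S.IsPositive) (hT : T.IsPositive)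
    (hle : (T - S).IsPositive) : ‖S‖ ≤ ‖T‖ := by
  refine opNorm_le_of_forms hS (norm_nonneg T) fun x => ?_
  have h1 := pos_inner hle x
  simp only [sub_apply, inner_sub_left] at h1
  have h2 : ⟪T x, x⟫ ≤ ‖T‖ * ‖x‖ ^ 2 := by
    calc ⟪T x, x⟫ ≤ ‖T x‖ * ‖x‖ := real_inner_le_norm _ _
    _ ≤ (‖T‖ * ‖x‖) * ‖x‖ := by gcongr; exact T.le_opNorm _
    _ = ‖T‖ * ‖x‖ ^ 2 := by ring
  linarith


/-- Monotone (decreasing) sequences of positive operators have strong limits. -/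
lemma exists_strong_limit (X : ℕ → H →L[ℝ] H) (hpos : ∀ n, (X n).IsPositive)
    (hdec : ∀ n, (X n - X (n + 1)).IsPositive) :
    ∃ P : H →L[ℝ] H, P.IsPositive ∧ (∀ n, (X n - P).IsPositive) ∧
      (∀ x, Tendsto (fun n => X n x) atTop (𝓝 (P x))) ∧
      (∀ W : H →L[ℝ] H, (∀ n x, W (X n x) = X n (W x)) → ∀ x, W (P x) = P (W x)) := by
  have hdiff : ∀ n m, n ≤ m → (X n - X m).IsPositive := by
    intro n m hnm
    induction m, hnm using Nat.le_induction with
    | base => simpa using ContinuousLinearMap.isPositive_zero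
    | succ m hm ih =>
        have := ih.add (hdec m)
        simpa [sub_add_sub_cancel] using this
  have hanti : ∀ x, Antitone fun n => ⟪X n x, x⟫ := by
    intro x
    refine antitone_nat_of_succ_le fun n => ?_
    have := pos_inner (hdec n) x
    simp only [ContinuousLinearMap.sub_apply, inner_sub_left] at this
    linarith
  have hnorm : ∀ n, ‖X n‖ ≤ ‖X 0‖ := fun n =>
    norm_le_norm_of_le (hpos n) (hpos 0) (hdiff 0 n (Nat.zero_le n))
  have hbdd : ∀ x, BddBelow (Set.range fun n => ⟪X n x, x⟫) := by
    intro x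
    exact ⟨0, by rintro r ⟨n, rfl⟩; exact pos_inner (hpos n) x⟩
  set l : H → ℝ := fun x => ⨅ n, ⟪X n x, x⟫ with hl_def
  have hl : ∀ x, Tendsto (fun n => ⟪X n x, x⟫) atTop (𝓝 (l x)) := fun x =>
    tendsto_atTop_ciInf (hanti x) (hbdd x)
  have hl_le : ∀ x n, l x ≤ ⟪X n x, x⟫ := fun x n => ciInf_le (hbdd x) n
  -- key quantitative estimate
  have hest : ∀ x n m, n ≤ m → ‖X n x - X m x‖ ^ 2 ≤ ‖X 0‖ * (⟪X n x, x⟫ - l x) := by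
    intro x n m hnm
    have hD := hdiff n m hnm
    have h1 := norm_sq_le hD x
    have h2 : ‖X n - X m‖ ≤ ‖X 0‖ := by
      refine le_trans (norm_le_norm_of_le hD (hpos n) ?_) (hnorm n)
      simpa using hpos m
    have h3 : ⟪(X n - X m) x, x⟫ ≤ ⟪X n x, x⟫ - l x := by
      simp only [ContinuousLinearMap.sub_apply, inner_sub_left]
      have := hl_le x m
      linarith
    have h4 : (0:ℝ) ≤ ⟪(X n - X m) x, x⟫ := pos_inner hD x
    simp only [ContinuousLinearMap.sub_apply] at h1 ⊢
    calc ‖X n x - X m x‖ ^ 2 ≤ ‖X n - X m‖ * ⟪(X n - X m) x, x⟫ := by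
          simpa [ContinuousLinearMap.sub_apply] using h1
    _ ≤ ‖X 0‖ * (⟪X n x, x⟫ - l x) := by
        apply mul_le_mul h2 h3 h4 (norm_nonneg _)
  have hcauchy : ∀ x, CauchySeq fun n => X n x := by
    intro x
    refine cauchySeq_of_le_tendsto_0 (fun N => Real.sqrt (‖X 0‖ * (⟪X N x, x⟫ - l x)))
      (fun n m N hn hm => ?_) ?_
    · have key : ∀ a b, N ≤ a → N ≤ b → a ≤ b →
          dist (X a x) (X b x) ≤ Real.sqrt (‖X 0‖ * (⟪X N x, x⟫ - l x)) := by
        intro a b ha hb hab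
        rw [dist_eq_norm]
        have h1 := hest x a b hab
        have h2 : ‖X 0‖ * (⟪X a x, x⟫ - l x) ≤ ‖X 0‖ * (⟪X N x, x⟫ - l x) := by
          have := hanti x ha
          have := hl_le x a
          nlinarith [norm_nonneg (X 0)]
        calc ‖X a x - X b x‖ = Real.sqrt (‖X a x - X b x‖ ^ 2) := by
              rw [Real.sqrt_sq (norm_nonneg _)]
        _ ≤ Real.sqrt (‖X 0‖ * (⟪X N x, x⟫ - l x)) :=
              Real.sqrt_le_sqrt (le_trans h1 h2)
      rcases le_total n m with h | h
      · exact key n m hn hm h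
      · rw [dist_comm]; exact key m n hm hn h
    · have : Tendsto (fun N => ‖X 0‖ * (⟪X N x, x⟫ - l x)) atTop (𝓝 0) := by
        have hsub : Tendsto (fun N => ⟪X N x, x⟫ - l x) atTop (𝓝 (l x - l x)) :=
          (hl x).sub (tendsto_const_nhds (x := l x))
        have := hsub.const_mul ‖X 0‖
        simpa using this
      have hc : Tendsto Real.sqrt (𝓝 0) (𝓝 0) := by
        simpa using (Real.continuous_sqrt.tendsto 0)
      exact hc.comp this
  choose P0 hP0 using fun x => cauchySeq_tendsto_of_complete (hcauchy x)
  have hadd : ∀ x y, P0 (x + y) = P0 x + P0 y := by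
    intro x y
    refine tendsto_nhds_unique (hP0 (x + y)) ?_
    have := (hP0 x).add (hP0 y)
    simpa using this
  have hsmul : ∀ (c : ℝ) (x : H), P0 (c • x) = c • P0 x := by
    intro c x
    refine tendsto_nhds_unique (hP0 (c • x)) ?_
    have := (hP0 x).const_smul c
    simpa using this
  have hbound : ∀ x, ‖P0 x‖ ≤ ‖X 0‖ * ‖x‖ := by
    intro x
    refine le_of_tendsto (hP0 x).norm (Eventually.of_forall fun n => ?_)
    calc ‖X n x‖ ≤ ‖X n‖ * ‖x‖ := (X n).le_opNorm x
    _ ≤ ‖X 0‖ * ‖x‖ := by gcongr; exact hnorm n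
  let Pl : H →ₗ[ℝ] H :=
    { toFun := P0, map_add' := hadd, map_smul' := hsmul }
  let P : H →L[ℝ] H := Pl.mkContinuous ‖X 0‖ hbound
  have hPapp : ∀ x, P x = P0 x := fun x => rfl
  have hPtend : ∀ x, Tendsto (fun n => X n x) atTop (𝓝 (P x)) := by
    intro x; rw [hPapp]; exact hP0 x
  have hPinner : ∀ x y, Tendsto (fun n => ⟪X n x, y⟫) atTop (𝓝 ⟪P x, y⟫) := fun x y =>
    (hPtend x).inner (tendsto_const_nhds (x := y))
  have hPsa : IsSelfAdjoint P := by
    rw [ContinuousLinearMap.isSelfAdjoint_iff_isSymmetric]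
    intro x y
    refine tendsto_nhds_unique (hPinner x y) ?_
    have h2 : Tendsto (fun n => ⟪x, X n y⟫) atTop (𝓝 ⟪x, P y⟫) :=
      (tendsto_const_nhds (x := x)).inner (hPtend y)
    exact h2.congr fun n => (symm_inner (hpos n).isSelfAdjoint x y).symm
  refine ⟨P, ?_, ?_, hPtend, ?_⟩
  · refine pos_def hPsa fun x => ?_
    exact le_of_tendsto_of_tendsto' tendsto_const_nhds (hPinner x x)
      (fun n => pos_inner (hpos n) x)
  · intro n
    refine pos_def ((hpos n).isSelfAdjoint.sub hPsa) fun x => ?_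
    simp only [ContinuousLinearMap.sub_apply, inner_sub_left, sub_nonneg]
    refine le_of_tendsto (hPinner x x) ?_
    filter_upwards [eventually_ge_atTop n] with m hm
    exact hanti x hm
  · intro W hW x
    refine tendsto_nhds_unique ((W.continuous.tendsto _).comp (hPtend x)) ?_
    exact (hPtend (W x)).congr fun n => (hW n x).symm


lemma smul_isPositive {T : H →L[ℝ] H} (hT : T.IsPositive) {c : ℝ} (hc : 0 ≤ c) :
    (c • T).IsPositive := by
  refine pos_def (IsSelfAdjoint.smul (star_trivial c) hT.isSelfAdjoint) fun x => ?_
  have : (c • T) x = c • T x := rfl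
  rw [this, real_inner_smul_left]
  exact mul_nonneg hc (pos_inner hT x)

lemma conj_isPositive {B C : H →L[ℝ] H} (hB : IsSelfAdjoint B) (hC : C.IsPositive) :
    (B * C * B).IsPositive := by
  have h := hC.conj_adjoint B
  rw [hB.adjoint_eq] at h
  exact h

lemma norm_le_one {B : H →L[ℝ] H} (hB : B.IsPositive)
    (hB1 : ((1 : H →L[ℝ] H) - B).IsPositive) : ‖B‖ ≤ 1 := by
  refine opNorm_le_of_forms hB zero_le_one fun x => ?_
  have h := pos_inner hB1 x
  simp only [ContinuousLinearMap.sub_apply, inner_sub_left, ContinuousLinearMap.one_apply] at h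
  have h2 : ⟪x, x⟫ = ‖x‖ ^ 2 := real_inner_self_eq_norm_sq x
  nlinarith

lemma monomial_isPositive {B : H →L[ℝ] H} (hB : B.IsPositive)
    (hB1 : ((1 : H →L[ℝ] H) - B).IsPositive) (i j : ℕ) :
    (B ^ i * (1 - B) ^ j).IsPositive := by
  have hcomm : Commute B (1 - B) := (Commute.one_right B).sub_right (Commute.refl B)
  have key : ∀ N i j, i + j ≤ N → (B ^ i * ((1 : H →L[ℝ] H) - B) ^ j).IsPositive := by
    intro N
    induction N with
    | zero =>
      intro i j hij
      have hi : i = 0 := by omega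
      have hj : j = 0 := by omega
      subst hi; subst hj
      simpa using ContinuousLinearMap.isPositive_one
    | succ N ih =>
      intro i j hij
      by_cases hi : 2 ≤ i
      · obtain ⟨k, rfl⟩ : ∃ k, i = k + 2 := ⟨i - 2, by omega⟩
        set Cj : H →L[ℝ] H := (1 - B) ^ j with hCj
        have hBCj : Cj * B = B * Cj := (hcomm.pow_right j).eq.symm
        have heq : B * (B ^ k * Cj) * B = B ^ (k + 2) * Cj := by
          have h1 : B * (B ^ k * Cj) * B = B * B ^ k * (Cj * B) := by
            rw [← mul_assoc, mul_assoc (B * B ^ k) Cj B]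
          rw [h1, hBCj, ← mul_assoc, ← pow_succ', ← pow_succ]
        rw [← heq]
        exact conj_isPositive hB.isSelfAdjoint (ih k j (by omega))
      · by_cases hj : 2 ≤ j
        · obtain ⟨k, rfl⟩ : ∃ k, j = k + 2 := ⟨j - 2, by omega⟩
          set D : H →L[ℝ] H := 1 - B with hD
          have hBD : D * B ^ i = B ^ i * D := ((hcomm.symm).pow_right i).eq
          have heq : D * (B ^ i * D ^ k) * D = B ^ i * D ^ (k + 2) := by
            have e1 : D * (B ^ i * D ^ k) = B ^ i * (D * D ^ k) := by
              rw [← mul_assoc, hBD, mul_assoc]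
            rw [e1, mul_assoc]
            congr 1
            rw [← pow_succ', ← pow_succ]
          rw [← heq]
          exact conj_isPositive hB1.isSelfAdjoint (ih i k (by omega))
        · have hnB : ‖B‖ ≤ 1 := norm_le_one hB hB1
          interval_cases i <;> interval_cases j
          · simpa using ContinuousLinearMap.isPositive_one
          · simpa using hB1
          · simpa using hB
          · -- B * (1 - B) is positive
            simp only [pow_one]
            have hsa : IsSelfAdjoint (B * (1 - B)) := by
              have h1 : star B = B := hB.isSelfAdjoint.star_eq
              have h2 : star ((1 : H →L[ℝ] H) - B) = 1 - B := hB1.isSelfAdjoint.star_eq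
              rw [IsSelfAdjoint, star_mul, h1, h2, hcomm.eq]
            refine pos_def hsa fun x => ?_
            have happ : (B * ((1 : H →L[ℝ] H) - B)) x = B x - B (B x) := by
              simp [ContinuousLinearMap.mul_apply, map_sub]
            rw [happ, inner_sub_left]
            have h3 : ⟪B (B x), x⟫ = ‖B x‖ ^ 2 := by
              rw [symm_inner hB.isSelfAdjoint (B x) x, real_inner_comm, real_inner_self_eq_norm_sq]
            have h4 := norm_sq_le hB x
            have h5 := pos_inner hB x
            nlinarith
  exact key (i + j) i j le_rfl


/-- The Newton iteration polynomials for `1 - sqrt(1-x)`-type constructions: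
`sqPoly 0 = 1`, `sqPoly (n+1) = (sqPoly n ^ 2 + X) / 2`. -/
def sqPoly : ℕ → Polynomial ℝ
  | 0 => 1
  | n + 1 => Polynomial.C (1 / 2 : ℝ) * (sqPoly n ^ 2 + Polynomial.X)

/-- Difference witnesses: `sqPoly n - sqPoly (n+1) = sqPolyD n * (1 - X)`. -/
def sqPolyD : ℕ → Polynomial ℝ
  | 0 => Polynomial.C (1 / 2 : ℝ)
  | n + 1 => Polynomial.C (1 / 2 : ℝ) * ((sqPoly n + sqPoly (n + 1)) * sqPolyD n)

lemma coeff_mul_nonneg {p q : Polynomial ℝ} (hp : ∀ k, 0 ≤ p.coeff k)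
    (hq : ∀ k, 0 ≤ q.coeff k) : ∀ k, 0 ≤ (p * q).coeff k := by
  intro k
  rw [Polynomial.coeff_mul]
  exact Finset.sum_nonneg fun x _ => mul_nonneg (hp _) (hq _)

lemma coeff_C_half_nonneg : ∀ k, 0 ≤ (Polynomial.C (1 / 2 : ℝ)).coeff k := by
  intro k
  rw [Polynomial.coeff_C]
  split <;> norm_num

lemma sqPoly_coeff_nonneg : ∀ n k, 0 ≤ (sqPoly n).coeff k := by
  intro n
  induction n with
  | zero =>
    intro k
    simp only [sqPoly, Polynomial.coeff_one]
    split <;> norm_num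
  | succ n ih =>
    show ∀ k, (0:ℝ) ≤ (Polynomial.C (1 / 2 : ℝ) * (sqPoly n ^ 2 + Polynomial.X)).coeff k
    refine coeff_mul_nonneg coeff_C_half_nonneg fun k => ?_
    rw [Polynomial.coeff_add]
    refine add_nonneg ?_ ?_
    · rw [sq]
      exact coeff_mul_nonneg ih ih k
    · rw [Polynomial.coeff_X]
      split <;> norm_num

lemma sqPolyD_coeff_nonneg : ∀ n k, 0 ≤ (sqPolyD n).coeff k := by
  intro n
  induction n with
  | zero => exact coeff_C_half_nonneg
  | succ n ih =>
    show ∀ k, (0:ℝ) ≤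
      (Polynomial.C (1 / 2 : ℝ) * ((sqPoly n + sqPoly (n + 1)) * sqPolyD n)).coeff k
    refine coeff_mul_nonneg coeff_C_half_nonneg (coeff_mul_nonneg (fun k => ?_) ih)
    rw [Polynomial.coeff_add]
    exact add_nonneg (sqPoly_coeff_nonneg n k) (sqPoly_coeff_nonneg (n + 1) k)

lemma sqPoly_sub_succ (n : ℕ) :
    sqPoly n - sqPoly (n + 1) = sqPolyD n * (1 - Polynomial.X) := by
  induction n with
  | zero =>
    show (1 : Polynomial ℝ) - Polynomial.C (1 / 2 : ℝ) * ((1 : Polynomial ℝ) ^ 2 + Polynomial.X)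
      = Polynomial.C (1 / 2 : ℝ) * (1 - Polynomial.X)
    have : (Polynomial.C (1 / 2 : ℝ) + Polynomial.C (1 / 2 : ℝ)) = 1 := by
      rw [← Polynomial.C_add]
      norm_num
    linear_combination (-1 : Polynomial ℝ) * this
  | succ n ih =>
    show sqPoly (n + 1) - Polynomial.C (1 / 2 : ℝ) * (sqPoly (n + 1) ^ 2 + Polynomial.X)
      = Polynomial.C (1 / 2 : ℝ) * ((sqPoly n + sqPoly (n + 1)) * sqPolyD n) * (1 - Polynomial.X)
    have h1 : sqPoly (n + 1) = Polynomial.C (1 / 2 : ℝ) * (sqPoly n ^ 2 + Polynomial.X) := rfl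
    linear_combination (Polynomial.C (1 / 2 : ℝ) * (sqPoly n + sqPoly (n + 1))) * ih + h1

/-- Existence of a positive square root, commuting with everything commuting with the base. -/
lemma exists_sqrt {C : H →L[ℝ] H} (hC : C.IsPositive) :
    ∃ S : H →L[ℝ] H, S.IsPositive ∧ S * S = C ∧
      ∀ W : H →L[ℝ] H, W * C = C * W → W * S = S * W := by
  rcases eq_or_ne C 0 with rfl | hC0
  · exact ⟨0, ContinuousLinearMap.isPositive_zero, by simp, fun W _ => by simp⟩
  have hc : (0 : ℝ) < ‖C‖ := norm_pos_iff.mpr hC0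
  set C' : H →L[ℝ] H := ‖C‖⁻¹ • C with hC'def
  have hC' : C'.IsPositive := smul_isPositive hC (by positivity)
  have h1C' : ((1 : H →L[ℝ] H) - C').IsPositive := by
    refine pos_def ((IsSelfAdjoint.one _).sub hC'.isSelfAdjoint) fun x => ?_
    simp only [ContinuousLinearMap.sub_apply, ContinuousLinearMap.one_apply, inner_sub_left]
    have h1 : ⟪C' x, x⟫ = ‖C‖⁻¹ * ⟪C x, x⟫ := by
      rw [hC'def]
      exact real_inner_smul_left _ _ _
    have h2 : ⟪C x, x⟫ ≤ ‖C‖ * ‖x‖ ^ 2 := by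
      calc ⟪C x, x⟫ ≤ ‖C x‖ * ‖x‖ := real_inner_le_norm _ _
      _ ≤ (‖C‖ * ‖x‖) * ‖x‖ := by gcongr; exact C.le_opNorm x
      _ = ‖C‖ * ‖x‖ ^ 2 := by ring
    have h3 : ⟪x, x⟫ = ‖x‖ ^ 2 := real_inner_self_eq_norm_sq x
    rw [h1, h3]
    have h4 : ‖C‖⁻¹ * ⟪C x, x⟫ ≤ ‖C‖⁻¹ * (‖C‖ * ‖x‖ ^ 2) :=
      mul_le_mul_of_nonneg_left h2 (by positivity)
    have h5 : ‖C‖⁻¹ * (‖C‖ * ‖x‖ ^ 2) = ‖x‖ ^ 2 := by field_simp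
    linarith
  set B : H →L[ℝ] H := 1 - C' with hBdef
  have hB : B.IsPositive := h1C'
  have h1B : ((1 : H →L[ℝ] H) - B).IsPositive := by
    have : (1 : H →L[ℝ] H) - B = C' := by rw [hBdef, sub_sub_cancel]
    rw [this]; exact hC'
  set Y : ℕ → H →L[ℝ] H := fun n => Polynomial.aeval B (sqPoly n) with hYdef
  have haevalpos : ∀ (p : Polynomial ℝ), (∀ k, 0 ≤ p.coeff k) → ∀ j : ℕ,
      ((Polynomial.aeval B p) * ((1 : H →L[ℝ] H) - B) ^ j).IsPositive := by
    intro p hp j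
    rw [Polynomial.aeval_eq_sum_range, Finset.sum_mul]
    refine Finset.sum_induction _ _ (fun a b ha hb => ha.add hb)
      ContinuousLinearMap.isPositive_zero fun i _ => ?_
    rw [smul_mul_assoc]
    exact smul_isPositive (monomial_isPositive hB h1B i j) (hp i)
  have hYpos : ∀ n, (Y n).IsPositive := by
    intro n
    have := haevalpos (sqPoly n) (sqPoly_coeff_nonneg n) 0
    simpa using this
  have hYdec : ∀ n, (Y n - Y (n + 1)).IsPositive := by
    intro n
    have heq : Y n - Y (n + 1) =
        (Polynomial.aeval B (sqPolyD n)) * ((1 : H →L[ℝ] H) - B) ^ 1 := by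
      rw [hYdef]
      simp only
      rw [← map_sub, sqPoly_sub_succ, map_mul, map_sub, map_one, Polynomial.aeval_X, pow_one]
    rw [heq]
    exact haevalpos (sqPolyD n) (sqPolyD_coeff_nonneg n) 1
  obtain ⟨P, hPpos, hPle, hPtend, hPcomm⟩ := exists_strong_limit Y hYpos hYdec
  have hY0 : Y 0 = 1 := by
    rw [hYdef]; simp [sqPoly]
  have hYrec : ∀ n x, Y (n + 1) x = (1 / 2 : ℝ) • (Y n (Y n x) + B x) := by
    intro n x
    have : Y (n + 1) = (1 / 2 : ℝ) • (Y n * Y n + B) := by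
      rw [hYdef]
      show Polynomial.aeval B (Polynomial.C (1 / 2 : ℝ) * (sqPoly n ^ 2 + Polynomial.X)) = _
      rw [map_mul, map_add, map_pow, Polynomial.aeval_X, Polynomial.aeval_C, sq,
        Algebra.smul_def]
    rw [this]
    rfl
  have hYnorm : ∀ n, ‖Y n‖ ≤ 1 := by
    intro n
    refine norm_le_one (hYpos n) ?_
    have hdiff : ∀ m, (Y 0 - Y m).IsPositive := by
      intro m
      induction m with
      | zero => simpa using ContinuousLinearMap.isPositive_zero
      | succ m ih => simpa [sub_add_sub_cancel] using ih.add (hYdec m)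
    rw [← hY0]
    exact hdiff n
  -- the candidate square root of C'
  set S' : H →L[ℝ] H := 1 - P with hS'def
  have hS'pos : S'.IsPositive := by
    have := hPle 0
    rwa [hY0] at this
  have hPP : ∀ x, P x = (1 / 2 : ℝ) • (P (P x) + B x) := by
    intro x
    have h1 : Tendsto (fun n => Y (n + 1) x) atTop (𝓝 (P x)) :=
      (hPtend x).comp (tendsto_add_atTop_nat 1)
    have h2 : Tendsto (fun n => Y n (Y n x)) atTop (𝓝 (P (P x))) := by
      rw [tendsto_iff_norm_sub_tendsto_zero]
      have hb : ∀ n, ‖Y n (Y n x) - P (P x)‖ ≤ ‖Y n x - P x‖ + ‖Y n (P x) - P (P x)‖ := by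
        intro n
        calc ‖Y n (Y n x) - P (P x)‖
            = ‖Y n (Y n x - P x) + (Y n (P x) - P (P x))‖ := by
              rw [map_sub]
              congr 1
              abel
        _ ≤ ‖Y n (Y n x - P x)‖ + ‖Y n (P x) - P (P x)‖ := norm_add_le _ _
        _ ≤ ‖Y n x - P x‖ + ‖Y n (P x) - P (P x)‖ := by
            gcongr
            calc ‖Y n (Y n x - P x)‖ ≤ ‖Y n‖ * ‖Y n x - P x‖ := (Y n).le_opNorm _
            _ ≤ 1 * ‖Y n x - P x‖ := by gcongr; exact hYnorm n
            _ = ‖Y n x - P x‖ := one_mul _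
      have hg : Tendsto (fun n => ‖Y n x - P x‖ + ‖Y n (P x) - P (P x)‖) atTop (𝓝 0) := by
        have g1 : Tendsto (fun n => ‖Y n x - P x‖) atTop (𝓝 0) :=
          tendsto_iff_norm_sub_tendsto_zero.mp (hPtend x)
        have g2 : Tendsto (fun n => ‖Y n (P x) - P (P x)‖) atTop (𝓝 0) :=
          tendsto_iff_norm_sub_tendsto_zero.mp (hPtend (P x))
        simpa using g1.add g2
      exact squeeze_zero (fun n => norm_nonneg _) hb hg
    have h3 : Tendsto (fun n => (1 / 2 : ℝ) • (Y n (Y n x) + B x)) atTop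
        (𝓝 ((1 / 2 : ℝ) • (P (P x) + B x))) :=
      (h2.add tendsto_const_nhds).const_smul _
    refine tendsto_nhds_unique h1 ?_
    exact h3.congr fun n => (hYrec n x).symm
  have hBx : ∀ x, B x = x - C' x := by
    intro x
    rw [hBdef]
    simp
  have h3' : ∀ x, P (P x) = P x + P x - B x := by
    intro x
    have h3 : (2 : ℝ) • P x = P (P x) + B x := by
      calc (2 : ℝ) • P x = (2 : ℝ) • ((1 / 2 : ℝ) • (P (P x) + B x)) :=
            congrArg (fun y : H => (2 : ℝ) • y) (hPP x)
      _ = P (P x) + B x := by rw [smul_smul]; norm_num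
    rw [two_smul] at h3
    exact (eq_sub_of_add_eq h3.symm)
  have hS'sq : S' * S' = C' := by
    ext x
    have h1 : (S' * S') x = x - P x - (P x - P (P x)) := by
      simp only [hS'def, ContinuousLinearMap.mul_apply, ContinuousLinearMap.sub_apply,
        ContinuousLinearMap.one_apply, map_sub]
    rw [h1, h3' x, hBx x]
    show _ = C' x
    abel
  -- commutation transfer
  have hWcomm : ∀ W : H →L[ℝ] H, W * C = C * W → ∀ x, W (S' x) = S' (W x) := by
    intro W hWC
    have hWB : ∀ x, W (B x) = B (W x) := by
      intro x
      have hWC' : W * C' = C' * W := by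
        rw [hC'def, mul_smul_comm, smul_mul_assoc, hWC]
      have hWB' : W * B = B * W := by
        rw [hBdef, mul_sub, sub_mul, mul_one, one_mul, hWC']
      have := ContinuousLinearMap.ext_iff.mp hWB' x
      simpa [ContinuousLinearMap.mul_apply] using this
    have hWY : ∀ n x, W (Y n x) = Y n (W x) := by
      intro n
      induction n with
      | zero =>
        intro x
        rw [hY0]
        simp
      | succ n ih =>
        intro x
        rw [hYrec n x, W.map_smul, map_add, ih, ih, hWB, ← hYrec n (W x)]
    have hWP := hPcomm W hWY
    intro x
    simp only [hS'def, ContinuousLinearMap.sub_apply, ContinuousLinearMap.one_apply, map_sub]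
    rw [hWP x]
  refine ⟨Real.sqrt ‖C‖ • S', smul_isPositive hS'pos (Real.sqrt_nonneg _), ?_, ?_⟩
  · rw [smul_mul_assoc, mul_smul_comm, smul_smul, hS'sq, Real.mul_self_sqrt (norm_nonneg C),
      hC'def, smul_smul, mul_inv_cancel₀ (ne_of_gt hc), one_smul]
  · intro W hWC
    ext x
    simp only [ContinuousLinearMap.mul_apply, ContinuousLinearMap.smul_apply, _root_.map_smul]
    rw [hWcomm W hWC x]

/-- Uniqueness of the positive square root. -/
lemma sqrt_unique {P Q : H →L[ℝ] H} (hP : P.IsPositive) (hQ : Q.IsPositive)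
    (h : P * P = Q * Q) : P = Q := by
  obtain ⟨S, hSpos, hSsq, hScomm⟩ := exists_sqrt (show (P * P).IsPositive by
    have := conj_isPositive hP.isSelfAdjoint (ContinuousLinearMap.isPositive_one (E := H))
    simpa using this)
  have key : ∀ R : H →L[ℝ] H, R.IsPositive → R * R = P * P → R = S := by
    intro R hR hRsq
    have hRS : R * S = S * R := by
      refine hScomm R ?_
      rw [← hRsq, ← mul_assoc]
    have hzero : (R + S) * (R - S) = 0 := by
      rw [add_mul, mul_sub, mul_sub, hRsq, hSsq]
      rw [hRS]
      abel
    have hEzero : ∀ x, R x - S x = 0 := by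
      intro x
      set y : H := R x - S x with hy
      have h0 : (0:ℝ) = ⟪R y, y⟫ + ⟪S y, y⟫ := by
        have h1 : (R + S) ((R - S) x) = 0 := by
          have := ContinuousLinearMap.ext_iff.mp hzero x
          simpa [ContinuousLinearMap.mul_apply] using this
        have h2 : (R - S) x = y := rfl
        have h3 : R y + S y = 0 := by
          rw [← h2] at hy
          have := h1
          simp only [ContinuousLinearMap.add_apply, h2] at this
          exact this
        have := congrArg (fun z => ⟪z, y⟫) h3
        simpa [inner_add_left] using this.symm
      have hR0 : ⟪R y, y⟫ = 0 := by
        have := pos_inner hR y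
        have := pos_inner hSpos y
        linarith
      have hS0 : ⟪S y, y⟫ = 0 := by
        have := pos_inner hR y
        have := pos_inner hSpos y
        linarith
      have hRy : R y = 0 := by
        have h4 := norm_sq_le hR y
        rw [hR0, mul_zero] at h4
        have : ‖R y‖ = 0 := by nlinarith [norm_nonneg (R y)]
        exact norm_eq_zero.mp this
      have hSy : S y = 0 := by
        have h4 := norm_sq_le hSpos y
        rw [hS0, mul_zero] at h4
        have : ‖S y‖ = 0 := by nlinarith [norm_nonneg (S y)]
        exact norm_eq_zero.mp this
      -- now ⟪y, y⟫ = ⟪(R-S) x, y⟫ = ⟪x, (R-S) y⟫ = 0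
      have hsaR : IsSelfAdjoint (R - S) := hR.isSelfAdjoint.sub hSpos.isSelfAdjoint
      have h5 : ⟪y, y⟫ = ⟪x, (R - S) y⟫ := by
        rw [← symm_inner hsaR x y]
        simp [ContinuousLinearMap.sub_apply, hy]
      have h6 : (R - S) y = 0 := by
        simp [ContinuousLinearMap.sub_apply, hRy, hSy]
      rw [h6, inner_zero_right] at h5
      exact inner_self_eq_zero.mp h5
    ext x
    have := hEzero x
    have h7 : R x - S x = 0 := this
    have h8 : R x = S x := by
      have := sub_eq_zero.mp h7
      exact this
    exact h8
  rw [key P hP rfl, key Q hQ h.symm]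


section Projections

variable (H1 : Submodule ℝ H) [CompleteSpace H1] (e : ℕ → H)

lemma projL_mem (x : H) : projL H1 x ∈ H1 := (H1.orthogonalProjectionOnto x).2

lemma projL_eq_self {x : H} (hx : x ∈ H1) : projL H1 x = x := by
  exact (Submodule.starProjection_eq_self_iff (K := H1)).mpr hx

lemma projL_eq_zero {x : H} (hx : x ∈ H1ᗮ) : projL H1 x = 0 := by
  simp [projL, Submodule.orthogonalProjectionOnto_apply_of_mem_orthogonal hx]

lemma projFin_apply (n : ℕ) (x : H) :
    projFin e n x = ∑ i ∈ Finset.range n, ⟪e i, x⟫ • e i := by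
  simp [projFin, ContinuousLinearMap.sum_apply]

lemma Pn_apply (n : ℕ) (x : H) :
    Pn H1 e n x = projL H1 x + ∑ i ∈ Finset.range n, ⟪e i, x⟫ • e i := by
  simp [Pn, projFin_apply]

variable (hemem : ∀ k, e k ∈ H1ᗮ)

include hemem in
lemma inner_e_H1 {y : H} (hy : y ∈ H1) (k : ℕ) : ⟪e k, y⟫ = 0 := by
  have := (Submodule.mem_orthogonal H1 (e k)).mp (hemem k) y hy
  rwa [real_inner_comm] at this

include hemem in
lemma Pn_eq_self (n : ℕ) {y : H} (hy : y ∈ H1) : Pn H1 e n y = y := by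
  rw [Pn_apply, projL_eq_self H1 hy]
  simp [inner_e_H1 H1 e hemem hy]

variable (he : Orthonormal ℝ e)

include hemem he in
lemma Pn_e {i n : ℕ} (hin : i < n) : Pn H1 e n (e i) = e i := by
  rw [Pn_apply, projL_eq_zero H1 (hemem i)]
  have : ∀ j, ⟪e j, e i⟫ = if j = i then (1:ℝ) else 0 := fun j => orthonormal_iff_ite.mp he j i
  rw [Finset.sum_congr rfl fun j _ => by rw [this j]]
  simp [Finset.sum_ite_eq' (Finset.range n) i, Finset.mem_range.mpr hin]

lemma Pn_isSelfAdjoint (n : ℕ) : IsSelfAdjoint (Pn H1 e n) := by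
  have h1 : IsSelfAdjoint (projL H1) := isSelfAdjoint_starProjection H1
  have h2 : IsSelfAdjoint (projFin e n) := by
    rw [ContinuousLinearMap.isSelfAdjoint_iff_isSymmetric]
    intro x y
    simp only [ContinuousLinearMap.coe_coe]
    rw [projFin_apply, projFin_apply, inner_sum, sum_inner]
    refine Finset.sum_congr rfl fun i _ => ?_
    rw [real_inner_smul_left, real_inner_smul_right]
    ring_nf
    rw [real_inner_comm x (e i)]
    ring
  exact h1.add h2

include hemem he in
lemma Pn_idem (n : ℕ) (x : H) : Pn H1 e n (Pn H1 e n x) = Pn H1 e n x := by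
  conv_lhs => rw [Pn_apply H1 e n x]
  rw [map_add, Pn_eq_self H1 e hemem n (projL_mem H1 x), map_sum]
  rw [Pn_apply H1 e n x]
  congr 1
  refine Finset.sum_congr rfl fun i hi => ?_
  rw [ContinuousLinearMap.map_smul, Pn_e H1 e hemem he (Finset.mem_range.mp hi)]

include hemem he in
lemma Pn_inner (n : ℕ) (x y : H) : ⟪Pn H1 e n x, y⟫ = ⟪x, Pn H1 e n y⟫ :=
  symm_inner (Pn_isSelfAdjoint H1 e n) x y

include hemem he in
lemma Pn_norm_le (n : ℕ) (x : H) : ‖Pn H1 e n x‖ ≤ ‖x‖ := by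
  rcases eq_or_lt_of_le (norm_nonneg (Pn H1 e n x)) with hz | hz
  · rw [← hz]; exact norm_nonneg x
  · have h1 : ‖Pn H1 e n x‖ ^ 2 = ⟪Pn H1 e n x, Pn H1 e n x⟫ :=
      (real_inner_self_eq_norm_sq _).symm
    have h2 : ⟪Pn H1 e n x, Pn H1 e n x⟫ = ⟪Pn H1 e n (Pn H1 e n x), x⟫ := by
      rw [Pn_inner H1 e hemem he]
      rw [real_inner_comm]
    rw [Pn_idem H1 e hemem he] at h2
    have h3 : ⟪Pn H1 e n x, x⟫ ≤ ‖Pn H1 e n x‖ * ‖x‖ := real_inner_le_norm _ _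
    nlinarith
 
include hemem he in
lemma Pn_mono {n m : ℕ} (hnm : n ≤ m) (x : H) :
    Pn H1 e m (Pn H1 e n x) = Pn H1 e n x := by
  conv_lhs => rw [Pn_apply H1 e n x]
  rw [map_add, Pn_eq_self H1 e hemem m (projL_mem H1 x), map_sum]
  rw [Pn_apply H1 e n x]
  congr 1
  refine Finset.sum_congr rfl fun i hi => ?_
  rw [ContinuousLinearMap.map_smul,
    Pn_e H1 e hemem he (lt_of_lt_of_le (Finset.mem_range.mp hi) hnm)]

include hemem he in
lemma Pn_tendsto (hspan : (Submodule.span ℝ (Set.range e)).topologicalClosure = H1ᗮ) (x : H) :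
    Tendsto (fun n => Pn H1 e n x) atTop (𝓝 x) := by
  haveI : CompleteSpace (H1ᗮ : Submodule ℝ H) :=
    (Submodule.isClosed_orthogonal H1).completeSpace_coe
  set e' : ℕ → (H1ᗮ : Submodule ℝ H) := fun k => ⟨e k, hemem k⟩ with he'def
  have he' : Orthonormal ℝ e' := by
    rw [orthonormal_iff_ite] at he ⊢
    intro i j
    rw [Submodule.coe_inner]
    exact he i j
  have hbot : (Submodule.span ℝ (Set.range e'))ᗮ = ⊥ := by
    rw [Submodule.eq_bot_iff]
    intro y hy
    have hgen : ∀ k, ⟪e k, (y : H)⟫ = 0 := by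
      intro k
      have hk : e' k ∈ Submodule.span ℝ (Set.range e') :=
        Submodule.subset_span ⟨k, rfl⟩
      have := (Submodule.mem_orthogonal _ y).mp hy (e' k) hk
      rw [Submodule.coe_inner] at this
      exact this
    have hyo : (y : H) ∈ (Submodule.span ℝ (Set.range e))ᗮ := by
      rw [Submodule.mem_orthogonal]
      intro u hu
      induction hu using Submodule.span_induction with
      | mem z hz => obtain ⟨k, rfl⟩ := hz; exact hgen k
      | zero => simp
      | add a b _ _ ha hb => rw [inner_add_left, ha, hb, add_zero]
      | smul c a _ ha => rw [inner_smul_left, ha, mul_zero]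
    have hyoo : (y : H) ∈ (Submodule.span ℝ (Set.range e))ᗮᗮ := by
      rw [Submodule.orthogonal_orthogonal_eq_closure, hspan]
      exact y.2
    have : ⟪(y : H), (y : H)⟫ = 0 :=
      (Submodule.mem_orthogonal _ _).mp hyoo (y : H) hyo
    have hy0 : (y : H) = 0 := inner_self_eq_zero.mp this
    exact Subtype.ext hy0
  set b' : HilbertBasis ℕ ℝ (H1ᗮ : Submodule ℝ H) :=
    HilbertBasis.mkOfOrthogonalEqBot he' hbot with hb'def
  have hcoe : ⇑b' = e' := HilbertBasis.coe_mkOfOrthogonalEqBot he' hbot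
  have hsum := b'.hasSum_orthogonalProjection x
  have hsumH := hsum.mapL (H1ᗮ : Submodule ℝ H).subtypeL
  have hsumH' : HasSum (fun i => ⟪e i, x⟫ • e i)
      ((H1ᗮ.orthogonalProjectionOnto x : H)) := by
    refine hsumH.congr_fun fun i => ?_
    rw [hcoe]
    simp [he'def]
  have ht := hsumH'.tendsto_sum_nat
  have hdec : (H1.orthogonalProjectionOnto x : H) + (H1ᗮ.orthogonalProjectionOnto x : H) = x := Submodule.starProjection_add_starProjection_orthogonal (K := H1) x
  have hfinal : Tendsto (fun n => Pn H1 e n x) atTop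
      (𝓝 ((H1.orthogonalProjectionOnto x : H) + (H1ᗮ.orthogonalProjectionOnto x : H))) := by
    have := (tendsto_const_nhds (x := (H1.orthogonalProjectionOnto x : H))).add ht
    refine this.congr fun n => ?_
    rw [Pn_apply]
    rfl
  rwa [hdec] at hfinal

/-- Conjugating a symmetric operator with range in `H1` by an operator fixing `H1`
does not change the quadratic form. -/
lemma form_conj {B Q : H →L[ℝ] H} (hB : IsSelfAdjoint B) (hr : ∀ x, B x ∈ H1)
    (hQ : IsSelfAdjoint Q) (hQfix : ∀ y ∈ H1, Q y = y) (x : H) :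
    ⟪B (Q x), Q x⟫ = ⟪B x, x⟫ := by
  calc ⟪B (Q x), Q x⟫ = ⟪Q (B (Q x)), x⟫ := (symm_inner hQ (B (Q x)) x).symm
  _ = ⟪B (Q x), x⟫ := by rw [hQfix _ (hr (Q x))]
  _ = ⟪Q x, B x⟫ := symm_inner hB (Q x) x
  _ = ⟪x, Q (B x)⟫ := symm_inner hQ x (B x)
  _ = ⟪B x, x⟫ := by rw [hQfix _ (hr x), real_inner_comm]

end Projections


section Trace

variable {ι : Type*} (b : HilbertBasis ι ℝ H)

lemma summable_of_le_op {D E : H →L[ℝ] H} (hD : D.IsPositive) (hle : (E - D).IsPositive)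
    (hE : Summable fun i => ⟪E (b i), b i⟫) : Summable fun i => ⟪D (b i), b i⟫ := by
  refine Summable.of_nonneg_of_le (fun i => pos_inner hD _) (fun i => ?_) hE
  have := pos_inner hle (b i)
  simp only [ContinuousLinearMap.sub_apply, inner_sub_left] at this
  linarith

lemma hasSum_parseval (z : H) : HasSum (fun j => ⟪b j, z⟫ ^ 2) (‖z‖ ^ 2) := by
  have h := b.hasSum_inner_mul_inner z z
  rw [real_inner_self_eq_norm_sq] at h
  have heq : (fun j => ⟪z, b j⟫ * ⟪b j, z⟫) = fun j => ⟪b j, z⟫ ^ 2 := by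
    funext j
    rw [sq, real_inner_comm z (b j)]
  rwa [heq] at h

/-- `tr (Q A Q) ≤ tr A` for a self-adjoint contraction `Q` and positive trace class `A`. -/
lemma summable_conj_contraction {A : H →L[ℝ] H} (hA : A.IsPositive)
    (hAsum : Summable fun i => ⟪A (b i), b i⟫) {Q : H →L[ℝ] H}
    (hQ : IsSelfAdjoint Q) (hQc : ∀ x, ‖Q x‖ ≤ ‖x‖) :
    Summable fun i => ⟪A (Q (b i)), Q (b i)⟫ := by
  obtain ⟨R, hR, hRsq, -⟩ := exists_sqrt hA
  have hform : ∀ u, ⟪A u, u⟫ = ‖R u‖ ^ 2 := by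
    intro u
    conv_lhs => rw [← hRsq]
    rw [ContinuousLinearMap.mul_apply, symm_inner hR.isSelfAdjoint (R u) u]
    exact real_inner_self_eq_norm_sq _
  refine summable_of_sum_le (c := ∑' i, ⟪A (b i), b i⟫) (fun i => pos_inner hA _) fun s => ?_
  have key : ∀ i, ⟪A (Q (b i)), Q (b i)⟫ = ∑' j, ⟪b j, R (Q (b i))⟫ ^ 2 := by
    intro i
    rw [hform, (hasSum_parseval b (R (Q (b i)))).tsum_eq]
  calc ∑ i ∈ s, ⟪A (Q (b i)), Q (b i)⟫ = ∑ i ∈ s, ∑' j, ⟪b j, R (Q (b i))⟫ ^ 2 :=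
        Finset.sum_congr rfl fun i _ => key i
  _ = ∑' j, ∑ i ∈ s, ⟪b j, R (Q (b i))⟫ ^ 2 :=
      (Summable.tsum_finsetSum fun i _ => (hasSum_parseval b (R (Q (b i)))).summable).symm
  _ ≤ ∑' j, ⟪A (b j), b j⟫ := by
      refine Summable.tsum_le_tsum (fun j => ?_) ?_ hAsum
      · -- Bessel
        have hsw : ∀ i, ⟪b j, R (Q (b i))⟫ = ⟪Q (R (b j)), b i⟫ := by
          intro i
          calc ⟪b j, R (Q (b i))⟫ = ⟪R (b j), Q (b i)⟫ :=
                (symm_inner hR.isSelfAdjoint (b j) (Q (b i))).symm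
          _ = ⟪Q (R (b j)), b i⟫ := (symm_inner hQ (R (b j)) (b i)).symm
        have hb1 : ∑ i ∈ s, ⟪b j, R (Q (b i))⟫ ^ 2 ≤ ‖Q (R (b j))‖ ^ 2 := by
          have hbes := b.orthonormal.sum_inner_products_le (s := s) (Q (R (b j)))
          have : ∀ i, ⟪b j, R (Q (b i))⟫ ^ 2 = ‖⟪b i, Q (R (b j))⟫‖ ^ 2 := by
            intro i
            rw [hsw i, real_inner_comm, Real.norm_eq_abs, sq_abs]
          rw [Finset.sum_congr rfl fun i _ => this i]
          exact hbes
        refine hb1.trans ?_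
        rw [hform]
        have := hQc (R (b j))
        nlinarith [norm_nonneg (Q (R (b j))), norm_nonneg (R (b j))]
      · exact summable_sum fun i _ => (hasSum_parseval b (R (Q (b i)))).summable
  _ = ∑' i, ⟪A (b i), b i⟫ := rfl

end Trace

end ShortAux

open ShortAux

/-- If `A` is in addition trace class (expressed, for the positive
operator `A`, as summability of `⟪A (b i), b i⟫` over a Hilbert basis `b`), then the
shorts `Tⁿ` of `Aⁿ = Pⁿ A Pⁿ` and the short `T` of `A` to `H1` are trace class and
`‖Tⁿ − T‖₁ → 0`, where the trace norm is `∑' i, ⟪S i, b i⟫` computed with the absolute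
value `Sₙ = |Tⁿ − T|`, i.e. the positive square root of `(Tⁿ − T)* (Tⁿ − T)`. -/
theorem short_truncation_tendsto_traceNorm
    [SecondCountableTopology H]
    (H1 : Submodule ℝ H) [CompleteSpace H1]
    (ι : Type*) (b : HilbertBasis ι ℝ H)
    (A : H →L[ℝ] H) (hA : A.IsPositive)
    (hAtrace : Summable fun i => ⟪A (b i), b i⟫)
    (e : ℕ → H) (he : Orthonormal ℝ e) (hemem : ∀ k, e k ∈ H1ᗮ)
    (hspan : (Submodule.span ℝ (Set.range e)).topologicalClosure = H1ᗮ)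
    (Tn : ℕ → H →L[ℝ] H)
    (hTn : ∀ n, IsShort (Pn H1 e n * A * Pn H1 e n) (Tn n) H1)
    (T : H →L[ℝ] H) (hT : IsShort A T H1) :
    (Summable fun i => ⟪T (b i), b i⟫) ∧
    (∀ n, Summable fun i => ⟪Tn n (b i), b i⟫) ∧
    ∀ S : ℕ → H →L[ℝ] H,
      (∀ n, (S n).IsPositive ∧
        S n * S n = ContinuousLinearMap.adjoint (Tn n - T) * (Tn n - T)) →
      (∀ n, Summable fun i => ⟪S n (b i), b i⟫) ∧
        Tendsto (fun n => ∑' i, ⟪S n (b i), b i⟫) atTop (𝓝 0) := by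
  classical
  have hPsa : ∀ n, IsSelfAdjoint (Pn H1 e n) := fun n => Pn_isSelfAdjoint H1 e n
  have hPfix : ∀ n (y : H), y ∈ H1 → Pn H1 e n y = y := fun n y hy =>
    Pn_eq_self H1 e hemem n hy
  have hPc : ∀ n (x : H), ‖Pn H1 e n x‖ ≤ ‖x‖ := fun n x => Pn_norm_le H1 e hemem he n x
  have hAn_inner : ∀ n (x : H), ⟪(Pn H1 e n * A * Pn H1 e n) x, x⟫
      = ⟪A (Pn H1 e n x), Pn H1 e n x⟫ := by
    intro n x
    have h0 : (Pn H1 e n * A * Pn H1 e n) x = Pn H1 e n (A (Pn H1 e n x)) := rfl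
    rw [h0]
    exact symm_inner (hPsa n) (A (Pn H1 e n x)) x
  have hAnpos : ∀ n, (Pn H1 e n * A * Pn H1 e n).IsPositive := fun n =>
    conj_isPositive (hPsa n) hA
  -- `T ≤ Tn n`
  have hTleTn : ∀ n, (Tn n - T).IsPositive := by
    intro n
    refine (hTn n).2.2.2 T hT.1 ?_ hT.2.2.1
    refine pos_def ((hAnpos n).isSelfAdjoint.sub hT.1.isSelfAdjoint) fun x => ?_
    have h1 : ⟪T x, x⟫ = ⟪T (Pn H1 e n x), Pn H1 e n x⟫ :=
      (form_conj H1 hT.1.isSelfAdjoint hT.2.2.1 (hPsa n) (hPfix n) x).symm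
    have h2 := pos_inner hT.2.1 (Pn H1 e n x)
    simp only [ContinuousLinearMap.sub_apply, inner_sub_left] at h2 ⊢
    rw [hAn_inner n x, h1]
    linarith
  -- `Tn (n+1) ≤ Tn n`
  have hTndec : ∀ n, (Tn n - Tn (n + 1)).IsPositive := by
    intro n
    refine (hTn n).2.2.2 (Tn (n + 1)) (hTn (n + 1)).1 ?_ (hTn (n + 1)).2.2.1
    refine pos_def ((hAnpos n).isSelfAdjoint.sub (hTn (n + 1)).1.isSelfAdjoint) fun x => ?_
    have h1 : ⟪Tn (n + 1) x, x⟫ = ⟪Tn (n + 1) (Pn H1 e n x), Pn H1 e n x⟫ :=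
      (form_conj H1 (hTn (n + 1)).1.isSelfAdjoint (hTn (n + 1)).2.2.1 (hPsa n) (hPfix n) x).symm
    have h2 := pos_inner (hTn (n + 1)).2.1 (Pn H1 e n x)
    have h3 : Pn H1 e (n + 1) (Pn H1 e n x) = Pn H1 e n x :=
      Pn_mono H1 e hemem he (Nat.le_succ n) x
    have h4 : ⟪(Pn H1 e (n + 1) * A * Pn H1 e (n + 1)) (Pn H1 e n x), Pn H1 e n x⟫
        = ⟪A (Pn H1 e n x), Pn H1 e n x⟫ := by
      rw [hAn_inner (n + 1) (Pn H1 e n x), h3]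
    simp only [ContinuousLinearMap.sub_apply, inner_sub_left] at h2 ⊢
    rw [h4] at h2
    rw [hAn_inner n x, h1]
    linarith
  obtain ⟨P, hPpos, hPle, hPt, -⟩ := exists_strong_limit Tn (fun n => (hTn n).1) hTndec
  have hform : ∀ x, Tendsto (fun n => ⟪Tn n x, x⟫) atTop (𝓝 ⟪P x, x⟫) := fun x =>
    (hPt x).inner tendsto_const_nhds
  have hPrange : ∀ x, P x ∈ H1 := by
    intro x
    have hcl : IsClosed (H1 : Set H) :=
      (completeSpace_coe_iff_isComplete.mp inferInstance).isClosed
    exact hcl.mem_of_tendsto (hPt x) (Eventually.of_forall fun n => (hTn n).2.2.1 x)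
  have hPA : (A - P).IsPositive := by
    refine pos_def (hA.isSelfAdjoint.sub hPpos.isSelfAdjoint) fun x => ?_
    have h1 : Tendsto (fun n => ⟪A (Pn H1 e n x), Pn H1 e n x⟫) atTop (𝓝 ⟪A x, x⟫) := by
      have hx := Pn_tendsto H1 e hemem he hspan x
      exact ((A.continuous.tendsto x).comp hx).inner hx
    have h2 : ∀ n, ⟪Tn n x, x⟫ ≤ ⟪A (Pn H1 e n x), Pn H1 e n x⟫ := by
      intro n
      have h5 := pos_inner (hTn n).2.1 x
      simp only [ContinuousLinearMap.sub_apply, inner_sub_left] at h5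
      rw [hAn_inner n x] at h5
      linarith
    have h6 := le_of_tendsto_of_tendsto' (hform x) h1 h2
    simp only [ContinuousLinearMap.sub_apply, inner_sub_left]
    linarith
  have hTP : (T - P).IsPositive := hT.2.2.2 P hPpos hPA hPrange
  have hPT : (P - T).IsPositive := by
    refine pos_def (hPpos.isSelfAdjoint.sub hT.1.isSelfAdjoint) fun x => ?_
    have h2 : ∀ n, ⟪T x, x⟫ ≤ ⟪Tn n x, x⟫ := by
      intro n
      have := pos_inner (hTleTn n) x
      simp only [ContinuousLinearMap.sub_apply, inner_sub_left] at this
      linarith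
    have h3 := ge_of_tendsto (hform x) (Eventually.of_forall h2)
    simp only [ContinuousLinearMap.sub_apply, inner_sub_left]
    linarith
  have hPeqT : P = T :=
    le_antisymm ((ContinuousLinearMap.le_def P T).mpr hTP)
      ((ContinuousLinearMap.le_def T P).mpr hPT)
  rw [hPeqT] at hform
  have hsumT : Summable fun i => ⟪T (b i), b i⟫ := summable_of_le_op b hT.1 hT.2.1 hAtrace
  have hsumAn : ∀ n, Summable fun i => ⟪(Pn H1 e n * A * Pn H1 e n) (b i), b i⟫ := by
    intro n
    have hs := summable_conj_contraction b hA hAtrace (hPsa n) (hPc n)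
    exact hs.congr fun i => (hAn_inner n (b i)).symm
  have hsumTn : ∀ n, Summable fun i => ⟪Tn n (b i), b i⟫ := fun n =>
    summable_of_le_op b (hTn n).1 (hTn n).2.1 (hsumAn n)
  refine ⟨hsumT, hsumTn, ?_⟩
  intro S hS
  have hSeq : ∀ n, S n = Tn n - T := by
    intro n
    refine sqrt_unique (hS n).1 (hTleTn n) ?_
    rw [(hS n).2, (hTleTn n).isSelfAdjoint.adjoint_eq]
  constructor
  · intro n
    refine ((hsumTn n).sub hsumT).congr fun i => ?_
    rw [hSeq n]
    simp [ContinuousLinearMap.sub_apply, inner_sub_left]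
  · have hTn0 : ∀ n, (Tn 0 - Tn n).IsPositive := by
      intro n
      induction n with
      | zero => simpa using ContinuousLinearMap.isPositive_zero
      | succ n ih => simpa [sub_add_sub_cancel] using ih.add (hTndec n)
    have hbound : ∀ (n : ℕ) (i : ι), ‖⟪S n (b i), b i⟫‖ ≤ ⟪Tn 0 (b i), b i⟫ := by
      intro n i
      rw [hSeq n]
      have h1 := pos_inner (hTleTn n) (b i)
      have h2 := pos_inner (hTn0 n) (b i)
      have h3 := pos_inner hT.1 (b i)
      simp only [ContinuousLinearMap.sub_apply, inner_sub_left] at h1 h2 ⊢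
      rw [Real.norm_eq_abs, abs_of_nonneg h1]
      linarith
    have hptw : ∀ i, Tendsto (fun n => ⟪S n (b i), b i⟫) atTop (𝓝 (0:ℝ)) := by
      intro i
      have h1 := (hform (b i)).sub (tendsto_const_nhds (x := ⟪T (b i), b i⟫))
      rw [sub_self] at h1
      refine h1.congr fun n => ?_
      rw [hSeq n]
      simp [ContinuousLinearMap.sub_apply, inner_sub_left]
    have hmain := tendsto_tsum_of_dominated_convergence
      (f := fun (n : ℕ) (i : ι) => ⟪S n (b i), b i⟫) (g := fun _ => (0:ℝ))
      (bound := fun i => ⟪Tn 0 (b i), b i⟫) (hsumTn 0) hptw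
      (Eventually.of_forall fun n i => hbound n i)
    simpa using hmain


end
end

section
/- Let μ be a Gaussian measure on an orthogonal direct sum H = H1 ⊕ H2 of separable real Hilbert spaces, fix an ordered orthonormal basis of H2, and set μₙ := (Pⁿ)_*μ. Let f : H → H be Borel measurable and square Bochner integrable with respect to μ with f ∘ Pⁿ = f. Then E_μ[f | F2ⁿ] is a version of the conditional expectation of f given F2 under μₙ: E_{μₙ}[f | F2] = E_μ[f | F2ⁿ] holds μₙ-almost everywhere. -/
open MeasureTheory ProbabilityTheory Filter Topology
open scoped RealInnerProductSpace

noncomputable section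

/-- Gaussian measure on a real inner product space. -/
def IsGaussianMeasure {E : Type*} [NormedAddCommGroup E] [InnerProductSpace ℝ E]
    [MeasurableSpace E] (μ : Measure E) : Prop :=
  IsProbabilityMeasure μ ∧ ∀ h : E, ∃ (m : ℝ) (v : NNReal),
    μ.map (fun x => ⟪h, x⟫) = gaussianReal m v

variable {H : Type*} [NormedAddCommGroup H] [InnerProductSpace ℝ H] [CompleteSpace H]

/-- The sub-σ-algebra of the Borel σ-algebra of `H` generated by the orthogonal
projection onto `H2 = H1ᗮ`. -/
def F2 [MeasurableSpace H] (H1 : Submodule ℝ H) [CompleteSpace H1] : MeasurableSpace H :=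
  MeasurableSpace.comap (fun x => projL H1ᗮ x) inferInstance

/-- The sub-σ-algebra of the Borel σ-algebra of `H` generated by `P_{H2ⁿ} ∘ P2`. -/
def F2n [MeasurableSpace H] (H1 : Submodule ℝ H) [CompleteSpace H1]
    (e : ℕ → H) (n : ℕ) : MeasurableSpace H :=
  MeasurableSpace.comap (fun x => projFin e n (projL H1ᗮ x)) inferInstance

set_option linter.unusedSectionVars false

section Aux

variable {H : Type*} [NormedAddCommGroup H] [InnerProductSpace ℝ H] [CompleteSpace H]

lemma projL_mem (S : Submodule ℝ H) [CompleteSpace S] (x : H) : projL S x ∈ S :=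
  (S.orthogonalProjectionOnto x).2

lemma projL_of_mem {S : Submodule ℝ H} [CompleteSpace S] {x : H} (hx : x ∈ S) :
    projL S x = x := by
  simpa [projL] using Submodule.starProjection_eq_self_iff.mpr hx

lemma projFin_apply (e : ℕ → H) (n : ℕ) (x : H) :
    projFin e n x = ∑ i ∈ Finset.range n, ⟪e i, x⟫ • e i := by
  simp [projFin]

variable {H1 : Submodule ℝ H} [CompleteSpace H1] {e : ℕ → H} {n : ℕ}

lemma inner_e_projL_orth (hemem : ∀ k, e k ∈ H1ᗮ) (i : ℕ) (x : H) :
    ⟪e i, projL H1ᗮ x⟫ = ⟪e i, x⟫ := by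
  have h := Submodule.inner_starProjection_left_eq_right H1ᗮ (e i) x
  rw [Submodule.starProjection_eq_self_iff.mpr (hemem i)] at h
  simpa [projL] using h.symm

lemma projFin_mem (hemem : ∀ k, e k ∈ H1ᗮ) (x : H) : projFin e n x ∈ H1ᗮ := by
  rw [projFin_apply]
  exact Submodule.sum_mem _ fun i _ => Submodule.smul_mem _ _ (hemem i)

lemma inner_e_projL_H1 (hemem : ∀ k, e k ∈ H1ᗮ) (i : ℕ) (x : H) :
    ⟪e i, projL H1 x⟫ = 0 := by
  rw [real_inner_comm]
  exact (Submodule.mem_orthogonal H1 (e i)).mp (hemem i) _ (projL_mem H1 x)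

lemma projFin_e (he : Orthonormal ℝ e) {i : ℕ} (hi : i ∈ Finset.range n) :
    projFin e n (e i) = e i := by
  rw [projFin_apply]
  rw [Finset.sum_eq_single i (fun j _ hj => by
    simp [orthonormal_iff_ite.mp he j i, hj]) (fun h => absurd hi h)]
  simp [orthonormal_iff_ite.mp he i i, he.1 i]

lemma projFin_idem (he : Orthonormal ℝ e) (x : H) :
    projFin e n (projFin e n x) = projFin e n x := by
  conv_lhs => rw [projFin_apply e n x, map_sum]
  rw [projFin_apply e n x]
  refine Finset.sum_congr rfl fun i hi => ?_
  rw [ContinuousLinearMap.map_smul, projFin_e he hi]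

lemma projL_orth_comp_Pn (hemem : ∀ k, e k ∈ H1ᗮ) (x : H) :
    projL H1ᗮ (Pn H1 e n x) = projFin e n x := by
  have h1 : projL H1ᗮ (projL H1 x) = 0 := by
    have := Submodule.orthogonalProjectionOnto_apply_of_mem_orthogonal
      (K := H1ᗮ) (Submodule.le_orthogonal_orthogonal H1 (projL_mem H1 x))
    show H1ᗮ.subtypeL (H1ᗮ.orthogonalProjectionOnto (projL H1 x)) = 0
    rw [this, map_zero]
  have h2 : projL H1ᗮ (projFin e n x) = projFin e n x :=
    projL_of_mem (projFin_mem hemem x)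
  simp [Pn, map_add, h1, h2]

lemma projFin_comp_Pn (he : Orthonormal ℝ e) (hemem : ∀ k, e k ∈ H1ᗮ) (x : H) :
    projFin e n (Pn H1 e n x) = projFin e n x := by
  have h1 : projFin e n (projL H1 x) = 0 := by
    rw [projFin_apply]
    exact Finset.sum_eq_zero fun i _ => by rw [inner_e_projL_H1 hemem, zero_smul]
  simp [Pn, map_add, h1, projFin_idem he]

lemma projFin_comp_projL_orth (hemem : ∀ k, e k ∈ H1ᗮ) (x : H) :
    projFin e n (projL H1ᗮ x) = projFin e n x := by
  rw [projFin_apply, projFin_apply]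
  exact Finset.sum_congr rfl fun i _ => by rw [inner_e_projL_orth hemem]

variable [MeasurableSpace H] [BorelSpace H]

lemma F2_le : F2 H1 ≤ (inferInstance : MeasurableSpace H) := by
  rintro s ⟨t, ht, rfl⟩
  exact ((projL H1ᗮ).continuous.measurable ht)

lemma F2n_le_F2 : F2n H1 e n ≤ F2 H1 := by
  rintro s ⟨t, ht, rfl⟩
  exact ⟨(fun y => projFin e n y) ⁻¹' t, (projFin e n).continuous.measurable ht, rfl⟩

lemma F2n_le : F2n H1 e n ≤ (inferInstance : MeasurableSpace H) :=
  (F2n_le_F2).trans F2_le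

lemma Pn_preimage_F2n (he : Orthonormal ℝ e) (hemem : ∀ k, e k ∈ H1ᗮ)
    {s : Set H} (hs : MeasurableSet[F2n H1 e n] s) :
    (fun x => Pn H1 e n x) ⁻¹' s = s := by
  obtain ⟨t, -, rfl⟩ := hs
  ext x
  simp only [Set.mem_preimage]
  rw [projFin_comp_projL_orth hemem, projFin_comp_Pn he hemem,
    projFin_comp_projL_orth hemem]

lemma Pn_preimage_F2 (hemem : ∀ k, e k ∈ H1ᗮ)
    {s : Set H} (hs : MeasurableSet[F2 H1] s) :
    MeasurableSet[F2n H1 e n] ((fun x => Pn H1 e n x) ⁻¹' s) := by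
  obtain ⟨t, ht, rfl⟩ := hs
  refine ⟨t, ht, ?_⟩
  ext x
  simp only [Set.mem_preimage]
  rw [projFin_comp_projL_orth hemem, projL_orth_comp_Pn hemem]

lemma comp_Pn_of_measurable (he : Orthonormal ℝ e) (hemem : ∀ k, e k ∈ H1ᗮ)
    {g : H → H} (hg : Measurable[F2n H1 e n] g) (x : H) :
    g (Pn H1 e n x) = g x := by
  have hs : MeasurableSet[F2n H1 e n] (g ⁻¹' {g x}) := hg (measurableSet_singleton _)
  have hinv := Pn_preimage_F2n he hemem hs
  have hx : x ∈ g ⁻¹' {g x} := rfl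
  rw [← hinv] at hx
  exact hx

end Aux

/-- For `μₙ := (Pⁿ)_*μ` and `f` square Bochner integrable with
`f ∘ Pⁿ = f`, the conditional expectation `E_μ[f | F2ⁿ]` is a version of
`E_{μₙ}[f | F2]`. -/
theorem condexp_map_eq_condexp_truncated_sigmaAlgebra
    [SecondCountableTopology H] [MeasurableSpace H] [BorelSpace H]
    (H1 : Submodule ℝ H) [CompleteSpace H1]
    (μ : Measure H) (hGauss : IsGaussianMeasure μ)
    (e : ℕ → H) (he : Orthonormal ℝ e) (hemem : ∀ k, e k ∈ H1ᗮ)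
    (hspan : (Submodule.span ℝ (Set.range e)).topologicalClosure = H1ᗮ)
    (n : ℕ)
    (f : H → H) (hfmeas : Measurable f) (hf2 : MemLp f 2 μ)
    (hfPn : ∀ x, f (Pn H1 e n x) = f x) :
    (μ.map (fun x => Pn H1 e n x))[f|F2 H1]
      =ᵐ[μ.map (fun x => Pn H1 e n x)] μ[f|F2n H1 e n] := by
  obtain ⟨hprob, -⟩ := hGauss
  have hPmeas : Measurable (fun x => Pn H1 e n x) := (Pn H1 e n).continuous.measurable
  set ν := μ.map (fun x => Pn H1 e n x) with hν
  haveI : IsProbabilityMeasure ν := Measure.isProbabilityMeasure_map hPmeas.aemeasurable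
  have hm2 : F2 H1 ≤ (inferInstance : MeasurableSpace H) := F2_le
  have hmn : F2n H1 e n ≤ (inferInstance : MeasurableSpace H) := F2n_le
  haveI : SigmaFinite (ν.trim hm2) := (isFiniteMeasure_trim hm2).toSigmaFinite
  haveI : SigmaFinite (μ.trim hmn) := (isFiniteMeasure_trim hmn).toSigmaFinite
  set g : H → H := μ[f|F2n H1 e n] with hg
  have hgsm : StronglyMeasurable[F2n H1 e n] g := stronglyMeasurable_condExp
  have hgP : ∀ x, g (Pn H1 e n x) = g x :=
    comp_Pn_of_measurable he hemem hgsm.measurable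
  have hfsm : StronglyMeasurable f := hfmeas.stronglyMeasurable
  have hfνsm : AEStronglyMeasurable f ν := hfsm.aestronglyMeasurable
  have hgνsm : AEStronglyMeasurable g ν :=
    (hgsm.mono F2n_le).aestronglyMeasurable
  have hfint : Integrable f μ := hf2.integrable (by norm_num)
  have hfintν : Integrable f ν := by
    rw [hν, integrable_map_measure hfνsm hPmeas.aemeasurable]
    have : f ∘ (fun x => Pn H1 e n x) = f := funext hfPn
    rwa [this]
  have hgintν : Integrable g ν := by
    rw [hν, integrable_map_measure hgνsm hPmeas.aemeasurable]
    have : g ∘ (fun x => Pn H1 e n x) = g := funext hgP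
    rw [this]
    exact integrable_condExp
  refine (ae_eq_condExp_of_forall_setIntegral_eq hm2 hfintν
    (fun s _ _ => hgintν.integrableOn) (fun s hs _ => ?_)
    ⟨g, hgsm.mono F2n_le_F2, EventuallyEq.rfl⟩).symm
  have hsmeas : MeasurableSet s := hm2 s hs
  have hpre : MeasurableSet[F2n H1 e n] ((fun x => Pn H1 e n x) ⁻¹' s) :=
    Pn_preimage_F2 hemem hs
  rw [hν, setIntegral_map hsmeas hgνsm hPmeas.aemeasurable,
    setIntegral_map hsmeas hfνsm hPmeas.aemeasurable]
  calc ∫ x in (fun x => Pn H1 e n x) ⁻¹' s, g (Pn H1 e n x) ∂μ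
      = ∫ x in (fun x => Pn H1 e n x) ⁻¹' s, g x ∂μ := by
        exact setIntegral_congr_fun (hmn _ hpre) fun x _ => hgP x
    _ = ∫ x in (fun x => Pn H1 e n x) ⁻¹' s, f x ∂μ :=
        setIntegral_condExp hmn hfint hpre
    _ = ∫ x in (fun x => Pn H1 e n x) ⁻¹' s, f (Pn H1 e n x) ∂μ := by
        exact setIntegral_congr_fun (hmn _ hpre) fun x _ => (hfPn x).symm

end
end
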